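/- Fix points y_1,…,y_N ∈ ℝ^p and a pairwise distinct point set x'_1,…,x'_n ∈ ℝ^p with x'_i ≠ y_m for all i, m. Define h^Q({x_i}_{i=1}^n; {x'_j}_{j=1}^n) = (2/(nN)) Σ_{i=1}^n Σ_{m=1}^N { ‖y_m − x_i‖₂²/(2‖y_m − x'_i‖₂) + ‖y_m − x'_i‖₂/2 } − (1/n²) Σ_{i=1}^n Σ_{j=1}^n ( ‖x'_i − x'_j‖₂ + 2(x_i − x'_i)ᵀ(x'_i − x'_j)/‖x'_i − x'_j‖₂ ), where terms with i = j in the second sum are zero. Then (i) h^Q(·; {x'_j}) majorizes Ê(·; {y_m}) at {x'_j}_{j=1}^n, i.e., h^Q({x_i};{x'_j}) ≥ Ê({x_i};{y_m}) for all {x_i} with equality at {x_i} = {x'_j}; and (ii) the unique global minimizer of h^Q(·; {x'_j}) over ({x_i}) ∈ (ℝ^p)^n is given coordinate-wise by x_i = ( Σ_{m=1}^N ‖x'_i − y_m‖₂^{−1} )^{−1} ( (N/n) Σ_{j≠i} (x'_i − x'_j)/‖x'_i − x'_j‖₂ + Σ_{m=1}^N y_m/‖x'_i − y_m‖₂ )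 for i = 1,…,n. -/

import Mathlib

open Finset

/-- The empirical energy objective
`Ê({xᵢ}; {yₘ}) = (2/(nN)) Σᵢ Σₘ ‖yₘ − xᵢ‖ − (1/n²) Σᵢ Σⱼ ‖xᵢ − xⱼ‖`. -/
noncomputable def Ehat {p n N : ℕ} (x : Fin n → EuclideanSpace ℝ (Fin p))
    (y : Fin N → EuclideanSpace ℝ (Fin p)) : ℝ :=
  (2 / ((n : ℝ) * N)) * ∑ i, ∑ m, ‖y m - x i‖
    - (1 / (n : ℝ) ^ 2) * ∑ i, ∑ j, ‖x i - x j‖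

/-- The quadratic surrogate `h^Q({xᵢ}; {x'ⱼ})` (terms with `i = j` in the
second double sum vanish, consistently with Lean's convention `0⁻¹ = 0`). -/
noncomputable def hQ {p n N : ℕ} (x x' : Fin n → EuclideanSpace ℝ (Fin p))
    (y : Fin N → EuclideanSpace ℝ (Fin p)) : ℝ :=
  (2 / ((n : ℝ) * N)) * ∑ i, ∑ m,
      (‖y m - x i‖ ^ 2 / (2 * ‖y m - x' i‖) + ‖y m - x' i‖ / 2)
    - (1 / (n : ℝ) ^ 2) * ∑ i, ∑ j,
      (‖x' i - x' j‖
        + 2 * (inner ℝ (x i - x' i) (x' i - x' j) : ℝ) / ‖x' i - x' j‖)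

/-- The closed-form update map `Mᵢ({x'ⱼ}; {yₘ})`. -/
noncomputable def Mmap {p n N : ℕ} (x' : Fin n → EuclideanSpace ℝ (Fin p))
    (y : Fin N → EuclideanSpace ℝ (Fin p)) (i : Fin n) :
    EuclideanSpace ℝ (Fin p) :=
  (∑ m, ‖x' i - y m‖⁻¹)⁻¹ •
    (((N : ℝ) / n) • ∑ j ∈ Finset.univ.erase i, ‖x' i - x' j‖⁻¹ • (x' i - x' j)
      + ∑ m, ‖x' i - y m‖⁻¹ • y m)


section AuxMM

open Finset

private lemma aux_maj (t a : ℝ) (ha : 0 < a) : t ≤ t^2/(2*a) + a/2 := by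
  have h : t^2/(2*a) + a/2 - t = (t-a)^2/(2*a) := by field_simp; ring
  have h2 : (0:ℝ) ≤ (t-a)^2/(2*a) := by positivity
  linarith

private lemma aux_scal (d A B J : ℝ) (hd : d ≠ 0) (h : A - B = J - d^2) :
    (d + 2*A/d + (d + 2*(-B)/d))/2 = J/d := by
  field_simp
  linear_combination 2*h

private lemma aux_eq (a : ℝ) (ha : 0 < a) : a^2/(2*a) + a/2 = a := by
  field_simp; ring

private lemma aux_nsq {F : Type*} [NormedAddCommGroup F] [InnerProductSpace ℝ F] (v w z : F) :
    ‖z - v‖^2 - ‖z - w‖^2 = (‖v‖^2 - ‖w‖^2) - 2*(inner ℝ (v - w) z : ℝ) := by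
  rw [norm_sub_sq_real, norm_sub_sq_real, inner_sub_left,
    real_inner_comm v z, real_inner_comm w z]; ring

private lemma aux_nsq' {F : Type*} [NormedAddCommGroup F] [InnerProductSpace ℝ F] (v w z : F) :
    ‖v - z‖^2 - ‖w - z‖^2 = (‖v‖^2 - ‖w‖^2) - 2*(inner ℝ (v - w) z : ℝ) := by
  rw [show v - z = -(z - v) by abel, show w - z = -(z - w) by abel, norm_neg, norm_neg]
  exact aux_nsq v w z

private lemma hQ_sub {p n N : ℕ} (hn : 0 < n) (hN : 0 < N)
    (x' : Fin n → EuclideanSpace ℝ (Fin p)) (y : Fin N → EuclideanSpace ℝ (Fin p))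
    (hxy : ∀ i m, x' i ≠ y m) (x u : Fin n → EuclideanSpace ℝ (Fin p)) :
    hQ x x' y - hQ u x' y =
      ∑ i, ((∑ m, ‖x' i - y m‖⁻¹) / ((n:ℝ) * N)) *
        (‖x i - Mmap x' y i‖^2 - ‖u i - Mmap x' y i‖^2) := by
  have hn' : (n:ℝ) ≠ 0 := Nat.cast_ne_zero.2 hn.ne'
  have hN' : (N:ℝ) ≠ 0 := Nat.cast_ne_zero.2 hN.ne'
  have step : hQ x x' y - hQ u x' y =
      ∑ i, ((2 / ((n:ℝ) * N)) *
          (∑ m, (‖y m - x i‖^2 - ‖y m - u i‖^2) / (2 * ‖y m - x' i‖))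
        - (1 / (n:ℝ)^2) *
          (∑ j, 2 * (inner ℝ (x i - u i) (x' i - x' j) : ℝ) / ‖x' i - x' j‖)) := by
    have e1 : (∑ i, ∑ m, (‖y m - x i‖ ^ 2 / (2 * ‖y m - x' i‖) + ‖y m - x' i‖ / 2))
        - (∑ i, ∑ m, (‖y m - u i‖ ^ 2 / (2 * ‖y m - x' i‖) + ‖y m - x' i‖ / 2))
        = ∑ i, ∑ m, (‖y m - x i‖^2 - ‖y m - u i‖^2) / (2 * ‖y m - x' i‖) := by
      rw [← Finset.sum_sub_distrib]
      refine Finset.sum_congr rfl fun i _ => ?_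
      rw [← Finset.sum_sub_distrib]
      exact Finset.sum_congr rfl fun m _ => by ring
    have e2 : (∑ i, ∑ j, (‖x' i - x' j‖
          + 2 * (inner ℝ (x i - x' i) (x' i - x' j) : ℝ) / ‖x' i - x' j‖))
        - (∑ i, ∑ j, (‖x' i - x' j‖
          + 2 * (inner ℝ (u i - x' i) (x' i - x' j) : ℝ) / ‖x' i - x' j‖))
        = ∑ i, ∑ j, 2 * (inner ℝ (x i - u i) (x' i - x' j) : ℝ) / ‖x' i - x' j‖ := by
      rw [← Finset.sum_sub_distrib]
      refine Finset.sum_congr rfl fun i _ => ?_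
      rw [← Finset.sum_sub_distrib]
      refine Finset.sum_congr rfl fun j _ => ?_
      simp only [inner_sub_left]
      ring
    calc hQ x x' y - hQ u x' y
        = (2 / ((n:ℝ) * N)) * ((∑ i, ∑ m, (‖y m - x i‖ ^ 2 / (2 * ‖y m - x' i‖) + ‖y m - x' i‖ / 2))
            - (∑ i, ∑ m, (‖y m - u i‖ ^ 2 / (2 * ‖y m - x' i‖) + ‖y m - x' i‖ / 2)))
          - (1 / (n:ℝ)^2) * ((∑ i, ∑ j, (‖x' i - x' j‖
              + 2 * (inner ℝ (x i - x' i) (x' i - x' j) : ℝ) / ‖x' i - x' j‖))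
            - (∑ i, ∑ j, (‖x' i - x' j‖
              + 2 * (inner ℝ (u i - x' i) (x' i - x' j) : ℝ) / ‖x' i - x' j‖))) := by
          unfold hQ; ring
      _ = _ := by
          rw [e1, e2, Finset.mul_sum, Finset.mul_sum, ← Finset.sum_sub_distrib]
  rw [step]
  refine Finset.sum_congr rfl fun i _ => ?_
  set v := x i
  set w := u i
  have ha : ∀ m, (0:ℝ) < ‖x' i - y m‖ := fun m => by
    rw [norm_sub_pos_iff]; exact hxy i m
  set S : ℝ := ∑ m, ‖x' i - y m‖⁻¹ with hS
  haveI : Nonempty (Fin N) := ⟨⟨0, hN⟩⟩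
  have hSpos : 0 < S := Finset.sum_pos (fun m _ => inv_pos.2 (ha m)) univ_nonempty
  set b : EuclideanSpace ℝ (Fin p) := ∑ m, ‖x' i - y m‖⁻¹ • y m with hb
  set W : EuclideanSpace ℝ (Fin p) :=
    ∑ j ∈ Finset.univ.erase i, ‖x' i - x' j‖⁻¹ • (x' i - x' j) with hW
  have h1 : (∑ m, (‖y m - v‖^2 - ‖y m - w‖^2) / (2 * ‖y m - x' i‖))
      = (‖v‖^2 - ‖w‖^2) / 2 * S - (inner ℝ (v - w) b : ℝ) := by
    rw [hS, hb, Finset.mul_sum, inner_sum, ← Finset.sum_sub_distrib]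
    refine Finset.sum_congr rfl fun m _ => ?_
    have hne : ‖y m - x' i‖ = ‖x' i - y m‖ := norm_sub_rev _ _
    rw [hne, aux_nsq v w (y m), real_inner_smul_right]
    have := (ha m).ne'
    field_simp
  have h2 : (∑ j, 2 * (inner ℝ (v - w) (x' i - x' j) : ℝ) / ‖x' i - x' j‖)
      = 2 * (inner ℝ (v - w) W : ℝ) := by
    have hWu : (inner ℝ (v - w) W : ℝ)
        = ∑ j, (inner ℝ (v - w) (‖x' i - x' j‖⁻¹ • (x' i - x' j)) : ℝ) := by
      rw [hW, ← Finset.sum_erase_add _ _ (Finset.mem_univ i)]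
      simp [inner_sum]
    rw [hWu, Finset.mul_sum]
    refine Finset.sum_congr rfl fun j _ => ?_
    rw [real_inner_smul_right]
    rw [div_eq_mul_inv]
    ring
  rw [h1, h2]
  have hM : (inner ℝ (v - w) (Mmap x' y i) : ℝ)
      = S⁻¹ * (((N:ℝ)/n) * (inner ℝ (v - w) W : ℝ) + (inner ℝ (v - w) b : ℝ)) := by
    unfold Mmap
    rw [real_inner_smul_right, inner_add_right, real_inner_smul_right]
  have hexp : ‖v - Mmap x' y i‖^2 - ‖w - Mmap x' y i‖^2
      = (‖v‖^2 - ‖w‖^2) - 2*(inner ℝ (v - w) (Mmap x' y i) : ℝ) := aux_nsq' v w _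
  rw [hexp, hM]
  field_simp
  ring

private lemma Ehat_le_hQ {p n N : ℕ}
    (x' : Fin n → EuclideanSpace ℝ (Fin p)) (y : Fin N → EuclideanSpace ℝ (Fin p))
    (hdistinct : Function.Injective x')
    (hxy : ∀ i m, x' i ≠ y m) (x : Fin n → EuclideanSpace ℝ (Fin p)) :
    Ehat x y ≤ hQ x x' y := by
  set f : Fin n → Fin n → ℝ := fun i j => ‖x' i - x' j‖
    + 2 * (inner ℝ (x i - x' i) (x' i - x' j) : ℝ) / ‖x' i - x' j‖ with hf
  have T1 : (∑ i, ∑ m, ‖y m - x i‖)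
      ≤ ∑ i, ∑ m, (‖y m - x i‖ ^ 2 / (2 * ‖y m - x' i‖) + ‖y m - x' i‖ / 2) := by
    refine Finset.sum_le_sum fun i _ => Finset.sum_le_sum fun m _ => ?_
    exact aux_maj _ _ (by rw [norm_sub_pos_iff]; exact fun h => hxy i m h.symm)
  have T2 : (∑ i, ∑ j, f i j) ≤ ∑ i, ∑ j, ‖x i - x j‖ := by
    have hhalf : (∑ i, ∑ j, f i j) = ∑ i, ∑ j, (f i j + f j i) / 2 := by
      have hdiv : ∀ (g : Fin n → Fin n → ℝ), (∑ i, ∑ j, g i j / 2) = (∑ i, ∑ j, g i j) / 2 := by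
        intro g
        rw [Finset.sum_div]
        exact Finset.sum_congr rfl fun i _ => (Finset.sum_div _ _ _).symm
      have hs2 : (∑ i, ∑ j, f j i / 2) = ∑ i, ∑ j, f i j / 2 := by
        rw [Finset.sum_comm]
      simp only [add_div, Finset.sum_add_distrib]
      rw [hs2, hdiv]
      ring
    rw [hhalf]
    refine Finset.sum_le_sum fun i _ => Finset.sum_le_sum fun j _ => ?_
    by_cases hij : i = j
    · subst hij
      simp [hf, sub_self]
    · have hd : 0 < ‖x' i - x' j‖ := by
        rw [norm_sub_pos_iff]; exact fun h => hij (hdistinct h)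
      have hrev : ‖x' j - x' i‖ = ‖x' i - x' j‖ := norm_sub_rev _ _
      have e1 : (inner ℝ (x j - x' j) (x' j - x' i) : ℝ)
          = - (inner ℝ (x j - x' j) (x' i - x' j) : ℝ) := by
        rw [show x' j - x' i = -(x' i - x' j) by abel, inner_neg_right]
      have e2 : (inner ℝ (x i - x' i) (x' i - x' j) : ℝ)
            - (inner ℝ (x j - x' j) (x' i - x' j) : ℝ)
          = (inner ℝ (x i - x j) (x' i - x' j) : ℝ) - ‖x' i - x' j‖^2 := by
        rw [← inner_sub_left,
          show (x i - x' i) - (x j - x' j) = (x i - x j) - (x' i - x' j) by abel,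
          inner_sub_left, real_inner_self_eq_norm_sq]
      have key : (f i j + f j i) / 2
          = (inner ℝ (x i - x j) (x' i - x' j) : ℝ) / ‖x' i - x' j‖ := by
        simp only [hf]
        rw [hrev, e1]
        exact aux_scal _ _ _ _ hd.ne' e2
      rw [key, div_le_iff₀ hd]
      exact real_inner_le_norm _ _
  unfold Ehat hQ
  have c1 : (0:ℝ) ≤ 2 / ((n:ℝ) * N) := by positivity
  have c2 : (0:ℝ) ≤ 1 / (n:ℝ)^2 := by positivity
  have := mul_le_mul_of_nonneg_left T1 c1
  have := mul_le_mul_of_nonneg_left T2 c2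
  linarith

private lemma hQ_self {p n N : ℕ}
    (x' : Fin n → EuclideanSpace ℝ (Fin p)) (y : Fin N → EuclideanSpace ℝ (Fin p))
    (hxy : ∀ i m, x' i ≠ y m) :
    hQ x' x' y = Ehat x' y := by
  unfold Ehat hQ
  congr 1
  · congr 1
    refine Finset.sum_congr rfl fun i _ => Finset.sum_congr rfl fun m _ => ?_
    exact aux_eq _ (by rw [norm_sub_pos_iff]; exact fun h => hxy i m h.symm)
  · congr 1
    refine Finset.sum_congr rfl fun i _ => Finset.sum_congr rfl fun j _ => ?_
    simp [sub_self]

end AuxMM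

/-- `h^Q(·; {x'ⱼ})` majorizes `Ê(·; {yₘ})` at `{x'ⱼ}`, and its
unique global minimizer over `(ℝ^p)^n` is given coordinate-wise by the
closed-form map `Mᵢ`. -/
theorem hQ_majorizes_and_closed_form_minimizer {p n N : ℕ}
    (hn : 0 < n) (hN : 0 < N)
    (x' : Fin n → EuclideanSpace ℝ (Fin p))
    (y : Fin N → EuclideanSpace ℝ (Fin p))
    (hdistinct : Function.Injective x')
    (hxy : ∀ i m, x' i ≠ y m) :
    (∀ x : Fin n → EuclideanSpace ℝ (Fin p), Ehat x y ≤ hQ x x' y) ∧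
    hQ x' x' y = Ehat x' y ∧
    (∀ x : Fin n → EuclideanSpace ℝ (Fin p),
      hQ (Mmap x' y) x' y ≤ hQ x x' y) ∧
    (∀ x : Fin n → EuclideanSpace ℝ (Fin p),
      hQ x x' y = hQ (Mmap x' y) x' y → x = Mmap x' y) := by
  haveI : Nonempty (Fin N) := ⟨⟨0, hN⟩⟩
  have hSpos : ∀ i, 0 < ∑ m, ‖x' i - y m‖⁻¹ := fun i =>
    Finset.sum_pos (fun m _ => inv_pos.2 (by rw [norm_sub_pos_iff]; exact hxy i m))
      univ_nonempty
  have hnN : (0:ℝ) < (n:ℝ) * N :=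
    mul_pos (Nat.cast_pos.2 hn) (Nat.cast_pos.2 hN)
  have hc : ∀ i, 0 < (∑ m, ‖x' i - y m‖⁻¹) / ((n:ℝ) * N) := fun i =>
    div_pos (hSpos i) hnN
  refine ⟨Ehat_le_hQ x' y hdistinct hxy, hQ_self x' y hxy, ?_, ?_⟩
  · intro x
    have h := hQ_sub hn hN x' y hxy x (Mmap x' y)
    simp only [sub_self, norm_zero, zero_pow, sub_zero, ne_eq, OfNat.ofNat_ne_zero,
      not_false_eq_true] at h
    have hnn : (0:ℝ) ≤ ∑ i, ((∑ m, ‖x' i - y m‖⁻¹) / ((n:ℝ) * N)) * ‖x i - Mmap x' y i‖^2 :=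
      Finset.sum_nonneg fun i _ => mul_nonneg (hc i).le (sq_nonneg _)
    linarith
  · intro x hx
    have h := hQ_sub hn hN x' y hxy x (Mmap x' y)
    rw [hx] at h
    simp only [sub_self, norm_zero, zero_pow, sub_zero, ne_eq, OfNat.ofNat_ne_zero,
      not_false_eq_true] at h
    have hz := (Finset.sum_eq_zero_iff_of_nonneg
      (fun i _ => mul_nonneg (hc i).le (sq_nonneg (‖x i - Mmap x' y i‖)))).mp h.symm
    funext i
    have hi := hz i (Finset.mem_univ i)
    have h2 : ‖x i - Mmap x' y i‖^2 = 0 :=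
      (mul_eq_zero.mp hi).resolve_left (hc i).ne'
    have h3 : x i - Mmap x' y i = 0 := by
      rw [pow_eq_zero_iff two_ne_zero, norm_eq_zero] at h2
      exact h2
    exact sub_eq_zero.mp h3
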